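/- arXiv:1912.13377 — 8 statements merged into one kernel-verified Lean document; each statement's English description precedes it below -/
import Mathlib

section
/- Let \mathcal{X} be a countable set and let d_1, ..., d_K be distributions on \mathcal{X} that are linearly independent in the real vector space of functions \mathcal{X} \to \mathbb{R}. Then for a K \times K real matrix P, the following are equivalent: (i) P is right stochastic and there exist distributions f_1, ..., f_K on \mathcal{X} with d_i(x) = \sum_{j=1}^K P_{ij} f_j(x) for all i and all x; (ii) P is an invertible right stochastic matrix and \sum_{i=1}^K (P^{-1})_{ji} d_i(x) \ge 0 for all j \in \{1,...,K\} and all x \in \mathcal{X}. -/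
open scoped BigOperators

/-- A function `f : 𝒳 → ℝ` on a countable set is a distribution if it is nonnegative,
summable, and its sum over `𝒳` equals `1`. -/
def IsDistribution {𝒳 : Type*} (f : 𝒳 → ℝ) : Prop :=
  (∀ x, 0 ≤ f x) ∧ Summable f ∧ ∑' x, f x = 1

/-- A `K × K` real matrix is right stochastic if all its entries are nonnegative and
each of its rows sums to `1`. -/
def RightStochastic {K : ℕ} (P : Matrix (Fin K) (Fin K) ℝ) : Prop :=
  (∀ i j, 0 ≤ P i j) ∧ ∀ i, ∑ j, P i j = 1

/-- For linearly independent source distributions `d 1, ..., d K`, a matrix `P` is a mixture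
matrix of a distribution decomposition (Problem 1) iff `P` is an invertible right stochastic
matrix such that `∑ i, P⁻¹ j i * d i x ≥ 0` for all `j` and `x` (Problem 2). -/
theorem decomposition_problem_iff_P_problem
    {𝒳 : Type*} [Countable 𝒳] {K : ℕ}
    (d : Fin K → 𝒳 → ℝ) (hd : ∀ i, IsDistribution (d i))
    (hind : LinearIndependent ℝ d)
    (P : Matrix (Fin K) (Fin K) ℝ) :
    (RightStochastic P ∧ ∃ f : Fin K → 𝒳 → ℝ, (∀ j, IsDistribution (f j)) ∧
        ∀ (i : Fin K) (x : 𝒳), d i x = ∑ j, P i j * f j x)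
      ↔
    (RightStochastic P ∧ IsUnit P.det ∧
        ∀ (j : Fin K) (x : 𝒳), 0 ≤ ∑ i, P⁻¹ j i * d i x) := by
  constructor
  · rintro ⟨hP, f, hf, hdf⟩
    have hdet : IsUnit P.det := by
      rw [isUnit_iff_ne_zero]
      intro h0
      obtain ⟨v, hv, hvP⟩ := Matrix.exists_vecMul_eq_zero_iff.2 h0
      apply hv
      have hz : ∀ i, v i = 0 := by
        apply Fintype.linearIndependent_iff.1 hind
        funext x
        have hcol : ∀ j, ∑ i, v i * P i j = 0 := by
          intro j
          have := congrFun hvP j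
          simpa [Matrix.vecMul, dotProduct] using this
        simp only [Finset.sum_apply, Pi.smul_apply, smul_eq_mul, Pi.zero_apply]
        calc ∑ i, v i * d i x = ∑ i, ∑ j, v i * (P i j * f j x) := by
              simp_rw [hdf, Finset.mul_sum]
          _ = ∑ j, (∑ i, v i * P i j) * f j x := by
              rw [Finset.sum_comm]
              simp_rw [Finset.sum_mul, mul_assoc]
          _ = 0 := by simp [hcol]
      funext i; exact hz i
    refine ⟨hP, hdet, fun j x => ?_⟩
    have hmv : P.mulVec (fun j => f j x) = fun i => d i x := by
      funext i
      simp [Matrix.mulVec, dotProduct, hdf i x]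
    have key : P⁻¹.mulVec (fun i => d i x) = fun j => f j x := by
      rw [← hmv, Matrix.mulVec_mulVec, Matrix.nonsing_inv_mul P hdet, Matrix.one_mulVec]
    have : ∑ i, P⁻¹ j i * d i x = f j x := by
      have := congrFun key j
      simpa [Matrix.mulVec, dotProduct] using this
    rw [this]
    exact (hf j).1 x
  · rintro ⟨hP, hdet, hnn⟩
    have hrow : ∀ j, ∑ i, P⁻¹ j i = 1 := by
      intro j
      have h1 : P.mulVec (fun _ => 1) = fun _ => 1 := by
        funext i
        simp [Matrix.mulVec, dotProduct, hP.2 i]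
      have : P⁻¹.mulVec (fun _ => 1) = (fun _ => (1:ℝ)) := by
        conv_lhs => rw [← h1]
        rw [Matrix.mulVec_mulVec, Matrix.nonsing_inv_mul P hdet, Matrix.one_mulVec]
      have := congrFun this j
      simpa [Matrix.mulVec, dotProduct] using this
    refine ⟨hP, fun j => fun x => ∑ i, P⁻¹ j i * d i x, fun j => ?_, fun i x => ?_⟩
    · refine ⟨hnn j, ?_, ?_⟩
      · exact summable_sum fun i _ => ((hd i).2.1.mul_left _)
      · rw [Summable.tsum_finsetSum fun i _ => ((hd i).2.1.mul_left _)]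
        simp_rw [tsum_mul_left]
        simp only [(fun i => (hd i).2.2 : ∀ i, ∑' x, d i x = 1), mul_one]
        exact hrow j
    · have key : P.mulVec (P⁻¹.mulVec (fun i => d i x)) = fun i => d i x := by
        rw [Matrix.mulVec_mulVec, Matrix.mul_nonsing_inv P hdet, Matrix.one_mulVec]
      have := congrFun key i
      simpa [Matrix.mulVec, dotProduct] using this.symm
end

section
/- Let \mathcal{X} be a countable set and let d_1, ..., d_K be distributions on \mathcal{X} that are linearly independent in the real vector space of functions \mathcal{X} \to \mathbb{R}. Then the set \mathfrak{P} of all mixture matrices of distribution decompositions of d_1, ..., d_K, i.e. \mathfrak{P} = \{ P : P right stochastic and there exist distributions f_1,...,f_K on \mathcal{X} with d_i(x) = \sum_{j=1}^K P_{ij} f_j(x) for all i, x \}, is a closed and compact subset of the space of K \times K real matrices. -/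
open scoped BigOperators
open scoped Matrix

lemma dist_le_one {𝒳 : Type*} {f : 𝒳 → ℝ} (hf : IsDistribution f) (x : 𝒳) : f x ≤ 1 := by
  obtain ⟨h0, hs, ht⟩ := hf
  calc f x ≤ ∑' y, f y := Summable.le_tsum hs x fun y _ => h0 y
  _ = 1 := ht

lemma det_ne_zero_of_indep {𝒳 : Type*} {K : ℕ} {d : Fin K → 𝒳 → ℝ}
    (hind : LinearIndependent ℝ d) {P : Matrix (Fin K) (Fin K) ℝ}
    (h : ∀ v : Fin K → ℝ, Matrix.vecMul v P = 0 → ∀ x, ∑ i, v i * d i x = 0) :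
    P.det ≠ 0 := by
  intro hdet
  obtain ⟨v, hv0, hvP⟩ := Matrix.exists_vecMul_eq_zero_iff.mpr hdet
  refine hv0 (funext (Fintype.linearIndependent_iff.mp hind v ?_))
  funext x
  simpa [Finset.sum_apply] using h v hvP x

lemma sum_swap_lemma {𝒳 : Type*} {K : ℕ} (v : Fin K → ℝ) (P : Matrix (Fin K) (Fin K) ℝ)
    (d f : Fin K → 𝒳 → ℝ) (x : 𝒳) (hdf : ∀ i, d i x = ∑ j, P i j * f j x) :
    ∑ i, v i * d i x = ∑ j, (Matrix.vecMul v P) j * f j x := by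
  simp only [hdf, Finset.mul_sum, Matrix.vecMul, dotProduct, Finset.sum_mul]
  rw [Finset.sum_comm]
  ring_nf


/-- For linearly independent source distributions, the set of all mixture matrices of
distribution decompositions is a closed and compact subset of the space of `K × K` real
matrices. -/
theorem mixture_matrices_isClosed_isCompact
    {𝒳 : Type*} [Countable 𝒳] {K : ℕ}
    (d : Fin K → 𝒳 → ℝ) (hd : ∀ i, IsDistribution (d i))
    (hind : LinearIndependent ℝ d) :
    IsClosed {P : Matrix (Fin K) (Fin K) ℝ | RightStochastic P ∧
        ∃ f : Fin K → 𝒳 → ℝ, (∀ j, IsDistribution (f j)) ∧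
          ∀ (i : Fin K) (x : 𝒳), d i x = ∑ j, P i j * f j x} ∧
      IsCompact {P : Matrix (Fin K) (Fin K) ℝ | RightStochastic P ∧
        ∃ f : Fin K → 𝒳 → ℝ, (∀ j, IsDistribution (f j)) ∧
          ∀ (i : Fin K) (x : 𝒳), d i x = ∑ j, P i j * f j x} := by
  set S := {P : Matrix (Fin K) (Fin K) ℝ | RightStochastic P ∧
      ∃ f : Fin K → 𝒳 → ℝ, (∀ j, IsDistribution (f j)) ∧
        ∀ (i : Fin K) (x : 𝒳), d i x = ∑ j, P i j * f j x} with hSdef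
  have hclosed : IsClosed S := by
    letI : SequentialSpace (Matrix (Fin K) (Fin K) ℝ) :=
      inferInstanceAs (SequentialSpace (Fin K → Fin K → ℝ))
    apply IsSeqClosed.isClosed
    intro Pn P hmem hlim
    -- entrywise convergence
    have hent : ∀ i j, Filter.Tendsto (fun n => Pn n i j) Filter.atTop (nhds (P i j)) :=
      fun i j => ((continuous_id.matrix_elem i j).tendsto P).comp hlim
    -- P is right stochastic
    have hPnn : ∀ i j, 0 ≤ P i j := fun i j =>
      ge_of_tendsto (hent i j) (Filter.Eventually.of_forall fun n => (hmem n).1.1 i j)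
    have hProw : ∀ i, ∑ j, P i j = 1 := by
      intro i
      have h1 : Filter.Tendsto (fun n => ∑ j, Pn n i j) Filter.atTop (nhds (∑ j, P i j)) :=
        tendsto_finset_sum _ fun j _ => hent i j
      have h2 : (fun n => ∑ j, Pn n i j) = fun _ => (1 : ℝ) :=
        funext fun n => (hmem n).1.2 i
      rw [h2] at h1
      exact tendsto_nhds_unique h1 tendsto_const_nhds
    -- choose decompositions
    choose f hf hfd using fun n => (hmem n).2
    -- each Pn n is invertible
    have hdetn : ∀ n, (Pn n).det ≠ 0 := by
      intro n
      refine det_ne_zero_of_indep hind fun v hv x => ?_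
      rw [sum_swap_lemma v (Pn n) d (f n) x (fun i => hfd n i x), hv]
      simp
    -- P is invertible
    have hdet : P.det ≠ 0 := by
      refine det_ne_zero_of_indep hind fun v hv x => ?_
      have bound : ∀ n, |∑ i, v i * d i x| ≤ ∑ j, |(Matrix.vecMul v (Pn n)) j| := by
        intro n
        rw [sum_swap_lemma v (Pn n) d (f n) x (fun i => hfd n i x)]
        refine (Finset.abs_sum_le_sum_abs _ _).trans (Finset.sum_le_sum fun j _ => ?_)
        rw [abs_mul]
        calc |(Matrix.vecMul v (Pn n)) j| * |f n j x|
            ≤ |(Matrix.vecMul v (Pn n)) j| * 1 := by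
              refine mul_le_mul_of_nonneg_left ?_ (abs_nonneg _)
              rw [abs_of_nonneg ((hf n j).1 x)]
              exact dist_le_one (hf n j) x
          _ = _ := mul_one _
      have hc : Filter.Tendsto (fun n => ∑ j, |(Matrix.vecMul v (Pn n)) j|)
          Filter.atTop (nhds 0) := by
        have : Filter.Tendsto (fun n => ∑ j, |(Matrix.vecMul v (Pn n)) j|)
            Filter.atTop (nhds (∑ j, |(Matrix.vecMul v P) j|)) := by
          refine tendsto_finset_sum _ fun j _ => ?_
          have : Filter.Tendsto (fun n => (Matrix.vecMul v (Pn n)) j)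
              Filter.atTop (nhds ((Matrix.vecMul v P) j)) := by
            simp only [Matrix.vecMul, dotProduct]
            exact tendsto_finset_sum _ fun i _ => ((hent i j).const_mul (v i))
          exact this.abs
        simpa [hv] using this
      have h0 : |∑ i, v i * d i x| ≤ 0 :=
        ge_of_tendsto hc (Filter.Eventually.of_forall bound)
      exact abs_nonpos_iff.mp h0
    have hunit : IsUnit P.det := isUnit_iff_ne_zero.mpr hdet
    -- f n is determined by Pn n
    have hfval : ∀ n (j : Fin K) (x : 𝒳), f n j x = ((Pn n)⁻¹ *ᵥ fun i => d i x) j := by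
      intro n j x
      have hPd : (fun i => d i x) = (Pn n) *ᵥ (fun j => f n j x) := by
        funext i
        simpa [Matrix.mulVec, dotProduct] using hfd n i x
      rw [hPd, Matrix.mulVec_mulVec, Matrix.nonsing_inv_mul _ (isUnit_iff_ne_zero.mpr (hdetn n)),
        Matrix.one_mulVec]
    -- inverse convergence
    have hinv : Filter.Tendsto (fun n => (Pn n)⁻¹) Filter.atTop (nhds P⁻¹) := by
      have hcinv : ContinuousAt Ring.inverse P.det := by
        rw [Ring.inverse_eq_inv']
        exact continuousAt_inv₀ hdet
      exact ((continuousAt_matrix_inv P hcinv).tendsto).comp hlim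
    set g : Fin K → 𝒳 → ℝ := fun j x => (P⁻¹ *ᵥ fun i => d i x) j with hg
    have hgt : ∀ (j : Fin K) (x : 𝒳),
        Filter.Tendsto (fun n => f n j x) Filter.atTop (nhds (g j x)) := by
      intro j x
      simp only [hfval]
      have : Filter.Tendsto (fun n => (Pn n)⁻¹ j) Filter.atTop (nhds (P⁻¹ j)) := by
        exact ((continuous_apply j).tendsto _).comp hinv
      simp only [Matrix.mulVec, dotProduct]
      exact tendsto_finset_sum _ fun i _ =>
        ((((continuous_id.matrix_elem j i).tendsto _).comp hinv).mul_const (d i x))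
    have hgnn : ∀ (j : Fin K) (x : 𝒳), 0 ≤ g j x := fun j x =>
      ge_of_tendsto (hgt j x) (Filter.Eventually.of_forall fun n => (hf n j).1 x)
    have hgeq : ∀ j, g j = fun x => ∑ i, P⁻¹ j i * d i x := by
      intro j; funext x; simp [hg, Matrix.mulVec, dotProduct]
    have hgsum : ∀ j, Summable (g j) := by
      intro j
      rw [hgeq j]
      exact summable_sum fun i _ => ((hd i).2.1.mul_left _)
    -- row sums of inverse
    have hinv_row : ∀ j, ∑ i, P⁻¹ j i = 1 := by
      have hPone : P *ᵥ (fun _ => (1:ℝ)) = fun _ => (1:ℝ) := by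
        funext i
        simpa [Matrix.mulVec, dotProduct] using hProw i
      have : P⁻¹ *ᵥ (fun _ => (1:ℝ)) = fun _ => (1:ℝ) := by
        conv_lhs => rw [← hPone]
        rw [Matrix.mulVec_mulVec, Matrix.nonsing_inv_mul _ hunit, Matrix.one_mulVec]
      intro j
      have := congrFun this j
      simpa [Matrix.mulVec, dotProduct] using this
    have hgts : ∀ j, ∑' x, g j x = 1 := by
      intro j
      rw [hgeq j]
      rw [Summable.tsum_finsetSum (fun i _ => ((hd i).2.1.mul_left _))]
      have : ∀ i, ∑' x, P⁻¹ j i * d i x = P⁻¹ j i := by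
        intro i
        rw [tsum_mul_left, (hd i).2.2, mul_one]
      simp only [this]
      exact hinv_row j
    refine ⟨⟨hPnn, hProw⟩, g, fun j => ⟨hgnn j, hgsum j, hgts j⟩, ?_⟩
    intro i x
    have : P *ᵥ (P⁻¹ *ᵥ fun i => d i x) = fun i => d i x := by
      rw [Matrix.mulVec_mulVec, Matrix.mul_nonsing_inv _ hunit, Matrix.one_mulVec]
    have := congrFun this i
    simp only [Matrix.mulVec, dotProduct] at this
    rw [← this]
    rfl
  refine ⟨hclosed, ?_⟩
  have hbox : IsCompact {Q : Matrix (Fin K) (Fin K) ℝ | ∀ i j, Q i j ∈ Set.Icc (0:ℝ) 1} := by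
    have heq : {Q : Matrix (Fin K) (Fin K) ℝ | ∀ i j, Q i j ∈ Set.Icc (0:ℝ) 1} =
        Set.univ.pi (fun _ : Fin K => Set.univ.pi fun _ : Fin K => Set.Icc (0:ℝ) 1) := by
      ext Q
      constructor
      · intro h
        exact fun i _ => Set.mem_univ_pi.mpr fun j => ⟨(h i j).1, (h i j).2⟩
      · intro h i j
        exact Set.mem_univ_pi.mp (h i (Set.mem_univ i)) j
    rw [heq]
    exact isCompact_univ_pi fun _ => isCompact_univ_pi fun _ => isCompact_Icc
  refine hbox.of_isClosed_subset hclosed fun Q hQ i j => ⟨hQ.1.1 i j, ?_⟩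
  calc Q i j ≤ ∑ j', Q i j' :=
        Finset.single_le_sum (fun j' _ => hQ.1.1 i j') (Finset.mem_univ j)
    _ = 1 := hQ.1.2 i
end

section
/- Let \mathcal{X} be a countable set and let d_1, ..., d_K be distributions on \mathcal{X} that are linearly independent in the real vector space of functions \mathcal{X} \to \mathbb{R}. Let \mathfrak{P} be the set of all right stochastic K \times K real matrices P such that there exist distributions f_1, ..., f_K on \mathcal{X} with d_i(x) = \sum_{j=1}^K P_{ij} f_j(x) for all i and x. Then there exists \hat{P} \in \mathfrak{P} with |\det \hat{P}| \le |\det P| for all P \in \mathfrak{P}, and moreover \det \hat{P} \ne 0. -/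
open scoped BigOperators

lemma abs_det_le_factorial {K : ℕ} (F : Matrix (Fin K) (Fin K) ℝ)
    (h : ∀ i j, |F i j| ≤ 1) : |F.det| ≤ (Nat.factorial K : ℝ) := by
  rw [Matrix.det_apply]
  calc |∑ σ : Equiv.Perm (Fin K), Equiv.Perm.sign σ • ∏ i, F (σ i) i|
      ≤ ∑ σ : Equiv.Perm (Fin K), |Equiv.Perm.sign σ • ∏ i, F (σ i) i| :=
        Finset.abs_sum_le_sum_abs _ _
    _ ≤ ∑ σ : Equiv.Perm (Fin K), 1 := by
        refine Finset.sum_le_sum fun σ _ => ?_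
        rw [Units.smul_def, zsmul_eq_mul]
        rw [abs_mul]
        have h1 : |((Equiv.Perm.sign σ : ℤ) : ℝ)| = 1 := by
          rcases Int.units_eq_one_or (Equiv.Perm.sign σ) with h' | h' <;> simp [h']
        rw [h1, one_mul, Finset.abs_prod]
        exact Finset.prod_le_one (fun i _ => abs_nonneg _) (fun i _ => h _ _)
    _ = (Nat.factorial K : ℝ) := by
        simp [Finset.card_univ, Fintype.card_perm]


lemma exists_eval_det_ne_zero {𝒳 : Type*} {K : ℕ} (d : Fin K → 𝒳 → ℝ)
    (hind : LinearIndependent ℝ d) :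
    ∃ x : Fin K → 𝒳, (Matrix.of fun i k => d i (x k)).det ≠ 0 := by
  set v : 𝒳 → (Fin K → ℝ) := fun x i => d i x with hv
  have hspan : Submodule.span ℝ (Set.range v) = ⊤ := by
    by_contra h
    obtain ⟨φ, hφne, hφ⟩ := Submodule.exists_dual_map_eq_bot_of_lt_top
      (lt_top_iff_ne_top.2 h) inferInstance
    have hker : ∀ w ∈ Submodule.span ℝ (Set.range v), φ w = 0 := by
      intro w hw
      have : φ w ∈ Submodule.map φ (Submodule.span ℝ (Set.range v)) :=
        Submodule.mem_map_of_mem hw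
      rw [hφ] at this
      simpa using this
    set c : Fin K → ℝ := fun i => φ (fun j => if i = j then (1:ℝ) else 0) with hc
    have hrep : ∀ w : Fin K → ℝ, φ w = ∑ i, w i * c i := by
      intro w
      conv_lhs => rw [pi_eq_sum_univ w]
      rw [map_sum]
      simp [hc, map_smul, smul_eq_mul]
    have hzero : ∀ x, ∑ i, c i * d i x = 0 := by
      intro x
      have := hker (v x) (Submodule.subset_span ⟨x, rfl⟩)
      rw [hrep] at this
      simpa [hv, mul_comm] using this
    have hc0 : ∀ i, c i = 0 := by
      have := Fintype.linearIndependent_iff.mp hind c ?_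
      · exact this
      · funext x
        simpa using hzero x
    apply hφne
    apply LinearMap.ext
    intro w
    rw [hrep]
    simp [hc0]
  obtain ⟨s, hs_sub, hs_span, hs_ind⟩ := exists_linearIndependent ℝ (Set.range v)
  rw [hspan] at hs_span
  have hsfin : s.Finite := hs_ind.setFinite
  have : Fintype s := hsfin.fintype
  have hb : Submodule.span ℝ (Set.range (fun y : s => (y : Fin K → ℝ))) = ⊤ := by
    rwa [Subtype.range_coe]
  let B : Module.Basis s ℝ (Fin K → ℝ) := Module.Basis.mk hs_ind (by rw [hb])
  have hcard : Fintype.card s = K := by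
    rw [← Module.finrank_eq_card_basis B, Module.finrank_fintype_fun_eq_card,
      Fintype.card_fin]
  let e : Fin K ≃ s := (Fintype.equivFinOfCardEq hcard).symm
  have hmem : ∀ k : Fin K, ((e k : Fin K → ℝ)) ∈ Set.range v := fun k => hs_sub (e k).2
  choose x hx using fun k => hmem k
  refine ⟨x, ?_⟩
  have hrows : LinearIndependent ℝ (fun k : Fin K => v (x k)) := by
    have : (fun k : Fin K => v (x k)) = (fun y : s => (y : Fin K → ℝ)) ∘ e := by
      funext k; simp [hx k]
    rw [this]
    exact hs_ind.comp e e.injective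
  have hM : LinearIndependent ℝ (fun k => (Matrix.of fun k i => v (x k) i) k) := hrows
  have hunit : IsUnit (Matrix.of fun k i => v (x k) i) :=
    Matrix.linearIndependent_rows_iff_isUnit.mp hM
  have hdet : (Matrix.of fun k i => v (x k) i).det ≠ 0 := by
    have := hunit.map (Matrix.detMonoidHom)
    simpa [isUnit_iff_ne_zero] using this
  have : (Matrix.of fun i k => d i (x k)) = (Matrix.of fun k i => v (x k) i).transpose := by
    ext i k; simp [hv, Matrix.transpose_apply]
  rw [this, Matrix.det_transpose]
  exact hdet

section Main
variable {𝒳 : Type*} {K : ℕ} (d : Fin K → 𝒳 → ℝ)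

-- the mixture set
abbrev mixSet : Set (Matrix (Fin K) (Fin K) ℝ) :=
  {P : Matrix (Fin K) (Fin K) ℝ | RightStochastic P ∧
    ∃ f : Fin K → 𝒳 → ℝ, (∀ j, IsDistribution (f j)) ∧
      ∀ (i : Fin K) (x : 𝒳), d i x = ∑ j, P i j * f j x}

abbrev auxSet (c : ℝ) : Set (Matrix (Fin K) (Fin K) ℝ) :=
  {P : Matrix (Fin K) (Fin K) ℝ | RightStochastic P ∧ c ≤ |P.det| ∧
    ∀ (j : Fin K) (y : 𝒳), 0 ≤ P.det * ∑ i, P.adjugate j i * d i y}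

lemma mix_subset_aux (hd : ∀ i, IsDistribution (d i)) (x : Fin K → 𝒳)
    (hxdet : (Matrix.of fun i k => d i (x k)).det ≠ 0) :
    mixSet d ⊆ auxSet d (|(Matrix.of fun i k => d i (x k)).det| / (Nat.factorial K : ℝ)) := by
  rintro P ⟨hst, f, hf, hmix⟩
  refine ⟨hst, ?_, ?_⟩
  · -- lower bound on |det P|
    set D : Matrix (Fin K) (Fin K) ℝ := Matrix.of fun i k => d i (x k) with hD
    set F : Matrix (Fin K) (Fin K) ℝ := Matrix.of fun j k => f j (x k) with hF
    have hDPF : D = P * F := by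
      ext i k
      simp [hD, hF, Matrix.mul_apply, hmix i (x k)]
    have hFb : |F.det| ≤ (Nat.factorial K : ℝ) := by
      apply abs_det_le_factorial
      intro j k
      rw [abs_le]
      constructor
      · have := (hf j).1 (x k)
        simp only [hF, Matrix.of_apply]
        linarith
      · have h1 := Summable.le_tsum (hf j).2.1 (x k) (fun y _ => (hf j).1 y)
        rw [(hf j).2.2] at h1
        simpa only [hF, Matrix.of_apply] using h1
    have hsplit : |D.det| = |P.det| * |F.det| := by
      rw [hDPF, Matrix.det_mul, abs_mul]
    rw [div_le_iff₀ (by positivity : (0:ℝ) < (Nat.factorial K : ℝ))]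
    calc |D.det| = |P.det| * |F.det| := hsplit
      _ ≤ |P.det| * (Nat.factorial K : ℝ) :=
          mul_le_mul_of_nonneg_left hFb (abs_nonneg _)
  · intro j y
    have key : ∑ i, P.adjugate j i * d i y = P.det * f j y := by
      calc ∑ i, P.adjugate j i * d i y
          = ∑ i, P.adjugate j i * ∑ l, P i l * f l y := by
            simp_rw [fun i => hmix i y]
        _ = ∑ i, ∑ l, P.adjugate j i * P i l * f l y := by
            simp [Finset.mul_sum, mul_assoc]
        _ = ∑ l, ∑ i, P.adjugate j i * P i l * f l y := Finset.sum_comm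
        _ = ∑ l, ((P.adjugate * P) j l) * f l y := by
            simp [Matrix.mul_apply, Finset.sum_mul]
        _ = P.det * f j y := by
            rw [Matrix.adjugate_mul]
            simp [Matrix.smul_apply, Matrix.one_apply, Finset.sum_ite_eq]
    rw [key, ← mul_assoc]
    exact mul_nonneg (mul_self_nonneg _) ((hf j).1 y)

lemma aux_subset_mix (hd : ∀ i, IsDistribution (d i)) {c : ℝ} (hc : 0 < c) :
    auxSet d c ⊆ mixSet d := by
  rintro P ⟨hst, hcle, hpos⟩
  have hdet0 : P.det ≠ 0 := by
    intro h
    rw [h] at hcle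
    simp at hcle
    linarith
  have hdu : IsUnit P.det := isUnit_iff_ne_zero.2 hdet0
  have hPinv : ∀ j i, P⁻¹ j i = P.det⁻¹ * P.adjugate j i := by
    intro j i
    rw [Matrix.inv_def, Matrix.smul_apply, Ring.inverse_eq_inv', smul_eq_mul]
  -- row sums of the inverse are 1
  have hrow1 : ∀ j, ∑ i, P⁻¹ j i = 1 := by
    intro j
    have h1 : P.mulVec (fun _ => 1) = fun _ => 1 := by
      ext i
      simp [Matrix.mulVec, dotProduct, hst.2 i]
    have h2 : P⁻¹.mulVec (fun _ => 1) = fun _ => 1 := by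
      conv_lhs => rw [← h1]
      rw [Matrix.mulVec_mulVec, Matrix.nonsing_inv_mul P hdu, Matrix.one_mulVec]
    have := congrFun h2 j
    simpa [Matrix.mulVec, dotProduct] using this
  refine ⟨hst, fun j y => ∑ i, P⁻¹ j i * d i y, fun j => ⟨?_, ?_, ?_⟩, ?_⟩
  · intro y
    show 0 ≤ ∑ i, P⁻¹ j i * d i y
    have h := hpos j y
    have heq : ∑ i, P⁻¹ j i * d i y = P.det⁻¹ * ∑ i, P.adjugate j i * d i y := by
      rw [Finset.mul_sum]
      simp_rw [hPinv, mul_assoc]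
    have h2 : P.det⁻¹ * ∑ i, P.adjugate j i * d i y
        = (P.det⁻¹)^2 * (P.det * ∑ i, P.adjugate j i * d i y) := by
      rw [sq, mul_assoc, ← mul_assoc (P.det⁻¹) (P.det), inv_mul_cancel₀ hdet0, one_mul]
    rw [heq, h2]
    exact mul_nonneg (sq_nonneg _) h
  · show Summable fun y => ∑ i, P⁻¹ j i * d i y
    exact summable_sum (fun i _ => ((hd i).2.1.mul_left _))
  · show ∑' y, ∑ i, P⁻¹ j i * d i y = 1
    rw [Summable.tsum_finsetSum (fun i _ => ((hd i).2.1.mul_left _))]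
    calc ∑ i, ∑' y, P⁻¹ j i * d i y = ∑ i, P⁻¹ j i * ∑' y, d i y := by
          simp_rw [tsum_mul_left]
      _ = ∑ i, P⁻¹ j i := by simp [fun i => (hd i).2.2]
      _ = 1 := hrow1 j
  · intro i y
    calc d i y = ∑ l, ((P * P⁻¹) i l) * d l y := by
          rw [Matrix.mul_nonsing_inv P hdu]
          simp [Matrix.one_apply, Finset.sum_ite_eq]
      _ = ∑ l, ∑ j, P i j * P⁻¹ j l * d l y := by
          simp [Matrix.mul_apply, Finset.sum_mul]
      _ = ∑ j, ∑ l, P i j * P⁻¹ j l * d l y := Finset.sum_comm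
      _ = ∑ j, P i j * ∑ l, P⁻¹ j l * d l y := by
          simp [Finset.mul_sum, mul_assoc]

lemma aux_isClosed (c : ℝ) : IsClosed (auxSet d c) := by
  have helem : ∀ i j : Fin K, Continuous fun P : Matrix (Fin K) (Fin K) ℝ => P i j :=
    fun i j => (continuous_apply j).comp (continuous_apply i)
  have hdet : Continuous fun P : Matrix (Fin K) (Fin K) ℝ => P.det := continuous_id.matrix_det
  have hadj : ∀ j i : Fin K, Continuous fun P : Matrix (Fin K) (Fin K) ℝ => P.adjugate j i :=
    fun j i => ((continuous_apply i).comp (continuous_apply j)).comp continuous_id.matrix_adjugate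
  have : auxSet d c =
      (⋂ i, ⋂ j, {P : Matrix (Fin K) (Fin K) ℝ | 0 ≤ P i j}) ∩
      ((⋂ i, {P : Matrix (Fin K) (Fin K) ℝ | ∑ j, P i j = 1}) ∩
      ({P : Matrix (Fin K) (Fin K) ℝ | c ≤ |P.det|} ∩
      (⋂ j, ⋂ y : 𝒳, {P : Matrix (Fin K) (Fin K) ℝ |
        0 ≤ P.det * ∑ i, P.adjugate j i * d i y}))) := by
    ext P
    simp only [Set.mem_setOf_eq, Set.mem_inter_iff, Set.mem_iInter, RightStochastic]
    tauto
  rw [this]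
  refine IsClosed.inter (isClosed_iInter fun i => isClosed_iInter fun j =>
      isClosed_le continuous_const (helem i j))
    (IsClosed.inter (isClosed_iInter fun i =>
      isClosed_eq (continuous_finset_sum _ fun j _ => helem i j) continuous_const)
    (IsClosed.inter (isClosed_le continuous_const (continuous_abs.comp hdet))
    (isClosed_iInter fun j => isClosed_iInter fun y =>
      isClosed_le continuous_const
        (hdet.mul (continuous_finset_sum _ fun i _ => (hadj j i).mul continuous_const)))))

lemma aux_isCompact (c : ℝ) : IsCompact (auxSet d c) := by
  have hbox : IsCompact {P : Matrix (Fin K) (Fin K) ℝ | ∀ i j, P i j ∈ Set.Icc (0:ℝ) 1} := by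
    have : {P : Matrix (Fin K) (Fin K) ℝ | ∀ i j, P i j ∈ Set.Icc (0:ℝ) 1} =
        Set.univ.pi (fun _ : Fin K => Set.univ.pi fun _ : Fin K => Set.Icc (0:ℝ) 1) := by
      ext P
      constructor
      · intro h
        exact fun i _ => fun j _ => h i j
      · intro h i j
        exact h i (Set.mem_univ i) j (Set.mem_univ j)
    rw [this]
    exact isCompact_univ_pi fun _ => isCompact_univ_pi fun _ => isCompact_Icc
  refine hbox.of_isClosed_subset (aux_isClosed d c) ?_
  rintro P ⟨⟨hnn, hrow⟩, -, -⟩ 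
  intro i j
  refine ⟨hnn i j, ?_⟩
  calc P i j ≤ ∑ j', P i j' :=
        Finset.single_le_sum (fun j' _ => hnn i j') (Finset.mem_univ j)
    _ = 1 := hrow i

end Main

/-- For linearly independent source distributions, there exists an extreme mixture matrix,
i.e. a mixture matrix `P̂` minimizing `|det P|` over the set `𝔓` of all mixture matrices of
distribution decompositions; moreover `det P̂ ≠ 0`. -/
theorem extreme_mixture_matrix_exists
    {𝒳 : Type*} [Countable 𝒳] {K : ℕ}
    (d : Fin K → 𝒳 → ℝ) (hd : ∀ i, IsDistribution (d i))
    (hind : LinearIndependent ℝ d) :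
    ∃ Phat ∈ {P : Matrix (Fin K) (Fin K) ℝ | RightStochastic P ∧
        ∃ f : Fin K → 𝒳 → ℝ, (∀ j, IsDistribution (f j)) ∧
          ∀ (i : Fin K) (x : 𝒳), d i x = ∑ j, P i j * f j x},
      (∀ P ∈ {P : Matrix (Fin K) (Fin K) ℝ | RightStochastic P ∧
          ∃ f : Fin K → 𝒳 → ℝ, (∀ j, IsDistribution (f j)) ∧
            ∀ (i : Fin K) (x : 𝒳), d i x = ∑ j, P i j * f j x},
        |Phat.det| ≤ |P.det|) ∧ Phat.det ≠ 0 := by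
  classical
  obtain ⟨x, hxdet⟩ := exists_eval_det_ne_zero d hind
  set c : ℝ := |(Matrix.of fun i k => d i (x k)).det| / (Nat.factorial K : ℝ) with hc
  have hcpos : 0 < c := div_pos (abs_pos.2 hxdet) (by positivity)
  have h1 : mixSet d ⊆ auxSet d c := mix_subset_aux d hd x hxdet
  have h2 : auxSet d c ⊆ mixSet d := aux_subset_mix d hd hcpos
  have hne : (1 : Matrix (Fin K) (Fin K) ℝ) ∈ mixSet d := by
    refine ⟨⟨?_, ?_⟩, d, hd, ?_⟩
    · intro i j
      rw [Matrix.one_apply]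
      split <;> norm_num
    · intro i
      simp [Matrix.one_apply]
    · intro i y
      simp [Matrix.one_apply, Finset.sum_ite_eq]
  obtain ⟨Phat, hPhat, hmin⟩ := (aux_isCompact d c).exists_isMinOn ⟨1, h1 hne⟩
    ((continuous_id.matrix_det.abs).continuousOn)
  refine ⟨Phat, h2 hPhat, fun P hP => isMinOn_iff.mp hmin P (h1 hP), ?_⟩
  have hle : c ≤ |Phat.det| := hPhat.2.1
  intro h
  rw [h] at hle
  simp at hle
  linarith
end

section
/- If Q is a right stochastic K \times K real matrix with |\det Q| = 1, then Q is a permutation matrix, i.e. there is a permutation \sigma of \{1,...,K\} with Q_{ij} = 1 if j = \sigma(i) and 0 otherwise. -/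
open scoped BigOperators

/-- A right stochastic matrix whose determinant has absolute value `1` is a permutation
matrix. -/
theorem stochastic_abs_det_eq_one_is_permutation
    {K : ℕ} (Q : Matrix (Fin K) (Fin K) ℝ) (hQ : RightStochastic Q)
    (hdet : |Q.det| = 1) :
    ∃ σ : Equiv.Perm (Fin K), ∀ i j, Q i j = if j = σ i then 1 else 0 := by
  classical
  obtain ⟨hpos, hrow⟩ := hQ
  -- determinant in row form via transpose
  have hdetT : Q.det = ∑ σ : Equiv.Perm (Fin K), (Equiv.Perm.sign σ : ℝ) * ∏ i, Q i (σ i) := by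
    rw [← Matrix.det_transpose, Matrix.det_apply']
    simp [Matrix.transpose_apply]
  -- total sum over all functions
  have htot : ∑ g ∈ Fintype.piFinset (fun _ : Fin K => (Finset.univ : Finset (Fin K))),
      ∏ i, Q i (g i) = 1 := by
    exact (Finset.prod_univ_sum (t := fun _ : Fin K => (Finset.univ : Finset (Fin K)))
      (f := fun i j => Q i j)).symm.trans (by simp [hrow])
  -- the permutation sum S
  set S : ℝ := ∑ σ : Equiv.Perm (Fin K), ∏ i, Q i (σ i) with hSdef
  have habs : (1 : ℝ) ≤ S := by
    calc (1 : ℝ) = |Q.det| := hdet.symm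
    _ ≤ ∑ σ : Equiv.Perm (Fin K), |(Equiv.Perm.sign σ : ℝ) * ∏ i, Q i (σ i)| := by
        rw [hdetT]; exact Finset.abs_sum_le_sum_abs _ _
    _ = S := by
        apply Finset.sum_congr rfl
        intro σ _
        rw [abs_mul]
        have h1 : |(Equiv.Perm.sign σ : ℝ)| = 1 := by
          rcases Int.units_eq_one_or (Equiv.Perm.sign σ) with h | h <;> simp [h]
        rw [h1, one_mul, abs_of_nonneg (Finset.prod_nonneg fun i _ => hpos i _)]
  -- the image of permutations inside the function space
  set T : Finset (Fin K → Fin K) :=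
    Finset.univ.image (fun σ : Equiv.Perm (Fin K) => ⇑σ) with hTdef
  have hTsum : ∑ g ∈ T, ∏ i, Q i (g i) = S := by
    rw [hTdef, Finset.sum_image (by intro a _ b _ h; exact Equiv.coe_fn_injective h)]
  -- there exists a permutation whose diagonal product is positive
  have hdetne : Q.det ≠ 0 := by
    intro h; rw [h] at hdet; simp at hdet
  have hexists : ∃ σ : Equiv.Perm (Fin K), ∀ i, 0 < Q i (σ i) := by
    by_contra hc
    push_neg at hc
    apply hdetne
    rw [hdetT]
    apply Finset.sum_eq_zero
    intro σ _
    obtain ⟨i, hi⟩ := hc σ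
    have : Q i (σ i) = 0 := le_antisymm hi (hpos i _)
    rw [Finset.prod_eq_zero (Finset.mem_univ i) this, mul_zero]
  obtain ⟨σ, hσ⟩ := hexists
  refine ⟨σ, fun i j => ?_⟩
  -- first: off entries are zero
  have hzero : ∀ i j, j ≠ σ i → Q i j = 0 := by
    intro i0 b hb
    by_contra hne
    have hQb : 0 < Q i0 b := lt_of_le_of_ne (hpos i0 b) (Ne.symm hne)
    -- build a non-injective function
    set f : Fin K → Fin K := Function.update (⇑σ) i0 b with hfdef
    have hfprod : 0 < ∏ i, Q i (f i) := by
      apply Finset.prod_pos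
      intro i _
      by_cases h : i = i0
      · subst h; simp [hfdef, hQb]
      · simpa [hfdef, Function.update_of_ne h] using hσ i
    have hfT : f ∉ T := by
      rw [hTdef]
      simp only [Finset.mem_image, Finset.mem_univ, true_and]
      rintro ⟨τ, hτ⟩
      have hinj : Function.Injective f := hτ ▸ τ.injective
      have h1 : σ.symm b ≠ i0 := by
        intro h
        apply hb
        rw [← h]; simp
      have h2 : f (σ.symm b) = f i0 := by
        simp [hfdef, Function.update_of_ne h1, Function.update_self]
      exact h1 (hinj h2)
    have hfmem : f ∈ Fintype.piFinset (fun _ : Fin K => (Finset.univ : Finset (Fin K))) := by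
      simp
    have hTsub : T ⊆ Fintype.piFinset (fun _ : Fin K => (Finset.univ : Finset (Fin K))) := by
      intro g _; simp
    have hle : S + ∏ i, Q i (f i) ≤ 1 := by
      rw [← htot, ← hTsum]
      have : ∑ g ∈ T, ∏ i, Q i (g i) + ∏ i, Q i (f i)
          = ∑ g ∈ insert f T, ∏ i, Q i (g i) := by
        rw [Finset.sum_insert hfT]; ring
      rw [this]
      apply Finset.sum_le_sum_of_subset_of_nonneg
      · intro g hg
        rcases Finset.mem_insert.mp hg with h | h
        · subst h; exact hfmem
        · exact hTsub h
      · intro g _ _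
        exact Finset.prod_nonneg fun i _ => hpos i _
    linarith
  by_cases h : j = σ i
  · subst h
    simp only [if_pos rfl]
    have := hrow i
    rw [← this]
    symm
    apply Finset.sum_eq_single_of_mem (σ i) (Finset.mem_univ _)
    intro b _ hb
    exact hzero i b hb
  · simp [h, hzero i j h]
end

section
/- Let D be a K \times K right stochastic real matrix and let P and F be K \times K right stochastic real matrices with D = P F. Then |\det P| \ge |\det D|. Consequently, since D = D \cdot I with the identity matrix I right stochastic, the matrix D itself attains the minimum of |\det P| over all right stochastic factorizations D = P F into right stochastic matrices. -/
open scoped BigOperators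

lemma rightStochastic_abs_det_le_one {K : ℕ} (F : Matrix (Fin K) (Fin K) ℝ)
    (hF : RightStochastic F) : |F.det| ≤ 1 := by
  rw [show F.det = F.transpose.det from (Matrix.det_transpose F).symm,
    Matrix.det_apply']
  calc |∑ σ : Equiv.Perm (Fin K), ((Equiv.Perm.sign σ : ℤ) : ℝ) * ∏ i, F.transpose (σ i) i|
      ≤ ∑ σ : Equiv.Perm (Fin K), |((Equiv.Perm.sign σ : ℤ) : ℝ) * ∏ i, F.transpose (σ i) i| :=
        Finset.abs_sum_le_sum_abs _ _
    _ = ∑ σ : Equiv.Perm (Fin K), ∏ i, F i (σ i) := by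
        refine Finset.sum_congr rfl fun σ _ => ?_
        rw [abs_mul]
        have h2 : |((Equiv.Perm.sign σ : ℤ) : ℝ)| = 1 := by
          rcases Int.units_eq_one_or (Equiv.Perm.sign σ) with h | h <;> simp [h]
        rw [h2, one_mul]
        simp only [Matrix.transpose_apply]
        exact abs_of_nonneg (Finset.prod_nonneg fun i _ => hF.1 _ _)
    _ ≤ ∑ g ∈ Fintype.piFinset (fun _ : Fin K => (Finset.univ : Finset (Fin K))),
          ∏ i, F i (g i) := by
        have hinj : ∀ σ ∈ (Finset.univ : Finset (Equiv.Perm (Fin K))),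
            ∀ τ ∈ Finset.univ, (fun σ : Equiv.Perm (Fin K) => (σ : Fin K → Fin K)) σ =
              (fun σ : Equiv.Perm (Fin K) => (σ : Fin K → Fin K)) τ → σ = τ :=
          fun σ _ τ _ h => Equiv.coe_fn_injective h
        rw [show (∑ σ : Equiv.Perm (Fin K), ∏ i, F i (σ i)) =
            ∑ g ∈ (Finset.univ : Finset (Equiv.Perm (Fin K))).image
              (fun σ : Equiv.Perm (Fin K) => (σ : Fin K → Fin K)),
              ∏ i, F i (g i) from
              (Finset.sum_image (f := fun h : Fin K → Fin K => ∏ i, F i (h i)) hinj).symm]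
        refine Finset.sum_le_sum_of_subset_of_nonneg ?_ ?_
        · intro g _; simp [Fintype.mem_piFinset]
        · intro g _ _; exact Finset.prod_nonneg fun i _ => hF.1 _ _
    _ = ∏ i, ∑ j, F i j := (Finset.prod_univ_sum _ _).symm
    _ = 1 := by simp [hF.2]

/-- In the case `|𝒳| = K`: for any factorization `D = P * F` of a right stochastic matrix
`D` into right stochastic matrices `P` and `F`, one has `|det D| ≤ |det P|`; consequently,
since `D = D * 1` with the identity matrix right stochastic, `D` itself attains the minimum
of `|det P|` over all such factorizations. -/
theorem extreme_mixture_matrix_case_X_eq_K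
    {K : ℕ} (D : Matrix (Fin K) (Fin K) ℝ) (hD : RightStochastic D) :
    (∀ P F : Matrix (Fin K) (Fin K) ℝ,
        RightStochastic P → RightStochastic F → D = P * F → |D.det| ≤ |P.det|) ∧
      RightStochastic (1 : Matrix (Fin K) (Fin K) ℝ) ∧
      D = D * (1 : Matrix (Fin K) (Fin K) ℝ) := by
  refine ⟨fun P F hP hF hPF => ?_, ⟨?_, ?_⟩, (Matrix.mul_one D).symm⟩
  · rw [hPF, Matrix.det_mul, abs_mul]
    calc |P.det| * |F.det| ≤ |P.det| * 1 :=
          mul_le_mul_of_nonneg_left (rightStochastic_abs_det_le_one F hF) (abs_nonneg _)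
      _ = |P.det| := mul_one _
  · intro i j
    by_cases h : i = j <;> simp [Matrix.one_apply, h]
  · intro i; simp [Matrix.one_apply]
end

section
/- Let D be a K \times K right stochastic real matrix with \det D \ne 0, and let P and F be K \times K right stochastic real matrices with D = P F. If |\det P| = |\det D|, then F is a permutation matrix; hence any extreme decomposition basis in the case |\mathcal{X}| = K equals the Kronecker-delta basis up to a permutation of states. -/
open scoped BigOperators

lemma stoch_perm {K : ℕ} (F : Matrix (Fin K) (Fin K) ℝ) (hF : RightStochastic F)
    (h0 : ∀ f : Fin K → Fin K, ¬ Function.Injective f → ∏ i, F i (f i) = 0) :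
    ∃ σ : Equiv.Perm (Fin K), ∀ i j, F i j = if j = σ i then 1 else 0 := by
  obtain ⟨hnn, hrow⟩ := hF
  have hex : ∀ i, ∃ j, F i j ≠ 0 := by
    intro i
    by_contra h
    push_neg at h
    have : ∑ j, F i j = 0 := Finset.sum_eq_zero fun j _ => h j
    rw [hrow i] at this; norm_num at this
  choose g hg using hex
  have hprod : ∏ i, F i (g i) ≠ 0 := Finset.prod_ne_zero_iff.2 fun i _ => hg i
  have hginj : Function.Injective g := by
    by_contra h
    exact hprod (h0 g h)
  have hgbij : Function.Bijective g := (Finite.injective_iff_bijective).1 hginj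
  refine ⟨Equiv.ofBijective g hgbij, fun i j => ?_⟩
  have hzero : ∀ j, j ≠ g i → F i j = 0 := by
    intro j hj
    by_contra hFij
    obtain ⟨i', hi'⟩ := hgbij.surjective j
    have hii' : i' ≠ i := fun h => hj (by rw [← hi', h])
    have hfinj : ¬ Function.Injective (Function.update g i j) := by
      intro hinj
      have h1 : Function.update g i j i = j := Function.update_self i j g
      have h2 : Function.update g i j i' = j := by
        rw [Function.update_of_ne hii', hi']
      exact hii' (hinj (h2.trans h1.symm))
    have hne : ∏ k, F k (Function.update g i j k) ≠ 0 := by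
      refine Finset.prod_ne_zero_iff.2 fun k _ => ?_
      by_cases hk : k = i
      · subst hk; rw [Function.update_self]; exact hFij
      · rw [Function.update_of_ne hk]; exact hg k
    exact hne (h0 _ hfinj)
  have hσi : (Equiv.ofBijective g hgbij) i = g i := rfl
  by_cases hj : j = (Equiv.ofBijective g hgbij) i
  · rw [if_pos hj, hj, hσi]
    have hsum : ∑ j', F i j' = F i (g i) :=
      Finset.sum_eq_single_of_mem (g i) (Finset.mem_univ _) fun b _ hb => hzero b hb
    rw [← hsum, hrow i]
  · rw [if_neg hj]
    exact hzero j (by rwa [hσi] at hj)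

/-- In the case `|𝒳| = K` with `det D ≠ 0`: if `D = P * F` is a factorization into right
stochastic matrices with `|det P| = |det D|`, then `F` is a permutation matrix; i.e. any
extreme decomposition basis equals the Kronecker-delta basis up to a permutation of states. -/
theorem extreme_basis_is_permutation_case_X_eq_K
    {K : ℕ} (D P F : Matrix (Fin K) (Fin K) ℝ)
    (hD : RightStochastic D) (hDdet : D.det ≠ 0)
    (hP : RightStochastic P) (hF : RightStochastic F)
    (hPF : D = P * F) (hdet : |P.det| = |D.det|) :
    ∃ σ : Equiv.Perm (Fin K), ∀ i j, F i j = if j = σ i then 1 else 0 := by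
  have hmul : D.det = P.det * F.det := by rw [hPF, Matrix.det_mul]
  have hPdet : P.det ≠ 0 := fun h => hDdet (by rw [hmul, h, zero_mul])
  have hFdet : |F.det| = 1 := by
    have hDabs : |D.det| = |P.det| * |F.det| := by rw [hmul, abs_mul]
    have h1 : |P.det| * 1 = |P.det| * |F.det| := by
      rw [mul_one]; exact hdet.trans hDabs
    exact (mul_left_cancel₀ (abs_ne_zero.2 hPdet) h1).symm
  have hFle : |F.det| ≤ ∑ σ : Equiv.Perm (Fin K), ∏ i, F i (σ i) := by
    rw [← Matrix.det_transpose F, Matrix.det_apply']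
    refine (Finset.abs_sum_le_sum_abs _ _).trans (le_of_eq ?_)
    refine Finset.sum_congr rfl fun σ _ => ?_
    have hpn : 0 ≤ ∏ i, F i (σ i) := Finset.prod_nonneg fun i _ => hF.1 i (σ i)
    rcases Int.units_eq_one_or (Equiv.Perm.sign σ) with h | h <;>
      simp [h, Matrix.transpose_apply, abs_of_nonneg hpn]
  have habs : (1 : ℝ) ≤ ∑ σ : Equiv.Perm (Fin K), ∏ i, F i (σ i) := hFdet ▸ hFle
  have htot : ∑ f ∈ (Fintype.piFinset fun _ : Fin K => (Finset.univ : Finset (Fin K))),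
      ∏ i, F i (f i) = 1 := by
    rw [← Finset.prod_univ_sum (t := fun _ => Finset.univ) (f := fun i j => F i j)]
    exact Finset.prod_eq_one fun i _ => hF.2 i
  have hsub : (Finset.univ.image fun σ : Equiv.Perm (Fin K) => (σ : Fin K → Fin K)) ⊆
      Fintype.piFinset fun _ : Fin K => (Finset.univ : Finset (Fin K)) := by
    intro f _; simp [Fintype.mem_piFinset]
  have himg : ∑ f ∈ Finset.univ.image (fun σ : Equiv.Perm (Fin K) => (σ : Fin K → Fin K)),
      ∏ i, F i (f i) = ∑ σ : Equiv.Perm (Fin K), ∏ i, F i (σ i) := by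
    rw [Finset.sum_image]
    intro a _ b _ h
    exact Equiv.coe_fn_injective h
  have hkey : ∀ f ∈ Fintype.piFinset fun _ : Fin K => (Finset.univ : Finset (Fin K)),
      f ∉ Finset.univ.image (fun σ : Equiv.Perm (Fin K) => (σ : Fin K → Fin K)) →
      ∏ i, F i (f i) = 0 := by
    have hle : ∑ f ∈ Finset.univ.image (fun σ : Equiv.Perm (Fin K) => (σ : Fin K → Fin K)),
        ∏ i, F i (f i) ≤ 1 := by
      rw [← htot]
      exact Finset.sum_le_sum_of_subset_of_nonneg hsub
        (fun f _ _ => Finset.prod_nonneg fun i _ => hF.1 i (f i))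
    have heq : ∑ f ∈ Finset.univ.image (fun σ : Equiv.Perm (Fin K) => (σ : Fin K → Fin K)),
        ∏ i, F i (f i) = 1 := le_antisymm hle (by rw [himg]; exact habs)
    have hdiff : ∑ f ∈ (Fintype.piFinset fun _ : Fin K => (Finset.univ : Finset (Fin K))) \
        Finset.univ.image (fun σ : Equiv.Perm (Fin K) => (σ : Fin K → Fin K)),
        ∏ i, F i (f i) = 0 := by
      rw [Finset.sum_sdiff_eq_sub hsub, htot, heq, sub_self]
    intro f hf hfn
    have := (Finset.sum_eq_zero_iff_of_nonneg
      (fun g _ => Finset.prod_nonneg fun i _ => hF.1 i (g i))).1 hdiff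
    exact this f (Finset.mem_sdiff.2 ⟨hf, hfn⟩)
  apply stoch_perm F hF
  intro f hfinj
  apply hkey f (by simp [Fintype.mem_piFinset])
  intro hmem
  obtain ⟨σ, _, hσ⟩ := Finset.mem_image.1 hmem
  exact hfinj (hσ ▸ σ.injective)
end

section
/- Let \mathcal{X} be a countable set and let d_A, d_B be distributions on \mathcal{X} with d_A(x) > 0 for every x \in \mathcal{X}. Suppose the set R = \{ d_B(x)/d_A(x) : x \in \mathcal{X} \} is bounded above, and let m = \inf R and M = \sup R. Let p_A, p_B \in [0,1] with p_B > p_A, and define f_1(x) = ((1-p_B) d_A(x) - (1-p_A) d_B(x)) / (p_A - p_B) and f_0(x) = (p_A d_B(x) - p_B d_A(x)) / (p_A - p_B). Then f_0(x) \ge 0 and f_1(x) \ge 0 for all x \in \mathcal{X} if and only if p_B \ge M p_A and p_B \ge 1 - m (1 - p_A). -/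
open scoped BigOperators

/-- Binary case `K = 2`: for mixture coefficients `p_A, p_B ∈ [0,1]` with `p_B > p_A`, the
decomposition basis
`f₁ x = ((1-p_B) d_A x - (1-p_A) d_B x)/(p_A - p_B)`,
`f₀ x = (p_A d_B x - p_B d_A x)/(p_A - p_B)`
is nonnegative if and only if `p_B ≥ M p_A` and `p_B ≥ 1 - m (1 - p_A)`, where `m` and `M`
are the infimum and supremum of the ratios `d_B x / d_A x`. -/
theorem binary_case_nonneg_iff
    {𝒳 : Type*} [Countable 𝒳]
    (dA dB : 𝒳 → ℝ) (hdA : IsDistribution dA) (hdB : IsDistribution dB)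
    (hpos : ∀ x, 0 < dA x)
    (hbdd : BddAbove (Set.range fun x => dB x / dA x))
    (pA pB : ℝ) (hpA0 : 0 ≤ pA) (hpA1 : pA ≤ 1) (hpB0 : 0 ≤ pB) (hpB1 : pB ≤ 1)
    (hlt : pA < pB) :
    (∀ x : 𝒳,
        0 ≤ (pA * dB x - pB * dA x) / (pA - pB) ∧
        0 ≤ ((1 - pB) * dA x - (1 - pA) * dB x) / (pA - pB))
      ↔
    (sSup (Set.range fun x => dB x / dA x) * pA ≤ pB ∧
      1 - sInf (Set.range fun x => dB x / dA x) * (1 - pA) ≤ pB) := by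
  have hden : pA - pB < 0 := by linarith
  have hA1 : pA < 1 := lt_of_lt_of_le hlt hpB1
  have hc : 0 < 1 - pA := by linarith
  have hne : Nonempty 𝒳 := by
    by_contra h
    have : IsEmpty 𝒳 := not_nonempty_iff.mp h
    have := hdA.2.2
    rw [tsum_empty] at this
    norm_num at this
  set r : 𝒳 → ℝ := fun x => dB x / dA x with hr
  have hrne : (Set.range r).Nonempty := Set.range_nonempty r
  -- pointwise equivalences
  have hptA : ∀ x, (0 ≤ (pA * dB x - pB * dA x) / (pA - pB)) ↔ r x * pA ≤ pB := by
    intro x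
    rw [div_nonneg_iff]
    constructor
    · rintro (⟨h1, h2⟩ | ⟨h1, h2⟩)
      · linarith
      · have : pA * dB x ≤ pB * dA x := by linarith
        rw [hr]
        rw [div_mul_eq_mul_div, div_le_iff₀ (hpos x)]
        linarith [this]
    · intro h
      right
      refine ⟨?_, le_of_lt hden⟩
      have h' : dB x * pA / dA x ≤ pB := by
        rw [hr] at h; rwa [div_mul_eq_mul_div] at h
      have : dB x * pA ≤ pB * dA x := (div_le_iff₀ (hpos x)).mp h'
      linarith
  have hptB : ∀ x, (0 ≤ ((1 - pB) * dA x - (1 - pA) * dB x) / (pA - pB)) ↔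
      1 - r x * (1 - pA) ≤ pB := by
    intro x
    rw [div_nonneg_iff]
    constructor
    · rintro (⟨h1, h2⟩ | ⟨h1, h2⟩)
      · linarith
      · have h3 : (1 - pB) * dA x ≤ (1 - pA) * dB x := by linarith
        have : (1 - pB) ≤ r x * (1 - pA) := by
          rw [hr, div_mul_eq_mul_div, le_div_iff₀ (hpos x)]
          linarith
        linarith
    · intro h
      right
      refine ⟨?_, le_of_lt hden⟩
      have h2 : (1 - pB) ≤ r x * (1 - pA) := by linarith
      have : (1 - pB) * dA x ≤ dB x * (1 - pA) := by
        rw [hr, div_mul_eq_mul_div, le_div_iff₀ (hpos x)] at h2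
        linarith
      linarith
  constructor
  · intro h
    constructor
    · rcases eq_or_lt_of_le hpA0 with hpA | hpA
      · -- pA = 0
        rw [← hpA, mul_zero]; exact hpB0
      · have hsup : sSup (Set.range r) ≤ pB / pA := by
          apply csSup_le hrne
          rintro y ⟨x, rfl⟩
          have := (hptA x).mp (h x).1
          rw [le_div_iff₀ hpA]
          exact this
        calc sSup (Set.range r) * pA ≤ (pB / pA) * pA :=
              mul_le_mul_of_nonneg_right hsup hpA0
          _ = pB := by field_simp
    · have hinf : (1 - pB) / (1 - pA) ≤ sInf (Set.range r) := by
        apply le_csInf hrne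
        rintro y ⟨x, rfl⟩
        have := (hptB x).mp (h x).2
        rw [div_le_iff₀ hc]
        linarith
      have := mul_le_mul_of_nonneg_right hinf (le_of_lt hc)
      rw [div_mul_cancel₀ _ (ne_of_gt hc)] at this
      linarith
  · rintro ⟨hM, hm⟩ x
    have hbdd' : BddBelow (Set.range r) := by
      refine ⟨0, ?_⟩
      rintro y ⟨x, rfl⟩
      exact div_nonneg (hdB.1 x) (le_of_lt (hpos x))
    constructor
    · rw [hptA x]
      have h1 : r x ≤ sSup (Set.range r) := le_csSup hbdd ⟨x, rfl⟩
      calc r x * pA ≤ sSup (Set.range r) * pA := mul_le_mul_of_nonneg_right h1 hpA0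
        _ ≤ pB := hM
    · rw [hptB x]
      have h1 : sInf (Set.range r) ≤ r x := csInf_le hbdd' ⟨x, rfl⟩
      have := mul_le_mul_of_nonneg_right h1 (le_of_lt hc)
      linarith
end

section
/- Let m, M be real numbers with 0 \le m < 1 < M, and let S = \{ (p_A, p_B) \in \mathbb{R}^2 : 0 \le p_A \le 1, 0 \le p_B \le 1, p_B \ge M p_A, p_B \ge 1 - m(1 - p_A) \}. Then the point (\hat{p}_A, \hat{p}_B) = ((1-m)/(M-m), M(1-m)/(M-m)) belongs to S, and for every (p_A, p_B) \in S one has p_B - p_A \ge \hat{p}_B - \hat{p}_A = (M-1)(1-m)/(M-m); i.e. (\hat{p}_A, \hat{p}_B) minimizes the mixture difference p_B - p_A over S. -/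
open scoped BigOperators

/-- In the binary case, the point `(p̂_A, p̂_B) = ((1-m)/(M-m), M(1-m)/(M-m))` belongs to the
solution region `S` and minimizes the mixture difference `p_B - p_A` over `S`, the minimum
value being `(M-1)(1-m)/(M-m)`. -/
theorem binary_case_extreme_coefficients
    (m M : ℝ) (hm0 : 0 ≤ m) (hm1 : m < 1) (hM : 1 < M) :
    ((1 - m) / (M - m), M * (1 - m) / (M - m)) ∈
        {q : ℝ × ℝ | 0 ≤ q.1 ∧ q.1 ≤ 1 ∧ 0 ≤ q.2 ∧ q.2 ≤ 1 ∧
          M * q.1 ≤ q.2 ∧ 1 - m * (1 - q.1) ≤ q.2} ∧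
      (∀ q ∈ {q : ℝ × ℝ | 0 ≤ q.1 ∧ q.1 ≤ 1 ∧ 0 ≤ q.2 ∧ q.2 ≤ 1 ∧
          M * q.1 ≤ q.2 ∧ 1 - m * (1 - q.1) ≤ q.2},
        M * (1 - m) / (M - m) - (1 - m) / (M - m) ≤ q.2 - q.1) ∧
      M * (1 - m) / (M - m) - (1 - m) / (M - m) = (M - 1) * (1 - m) / (M - m) := by
  have hMm : (0:ℝ) < M - m := by linarith
  have hMm' : M - m ≠ 0 := ne_of_gt hMm
  have heq : M * (1 - m) / (M - m) - (1 - m) / (M - m)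
      = (M - 1) * (1 - m) / (M - m) := by
    field_simp
  have ht : (1 - m) / (M - m) * (M - m) = 1 - m := div_mul_cancel₀ _ hMm'
  refine ⟨⟨?_, ?_, ?_, ?_, ?_, ?_⟩, ?_, heq⟩ <;> try dsimp only
  · apply div_nonneg <;> linarith
  · rw [div_le_one hMm]; linarith
  · apply div_nonneg <;> nlinarith
  · rw [div_le_one hMm]; nlinarith
  · rw [mul_div_assoc]
  · rw [mul_div_assoc]; nlinarith [ht]
  · rintro ⟨a, b⟩ ⟨h1, h2, h3, h4, h5, h6⟩
    dsimp only at *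
    rw [heq, div_le_iff₀ hMm]
    nlinarith [mul_nonneg (by linarith : (0:ℝ) ≤ 1 - m) (by linarith : 0 ≤ b - M * a),
      mul_nonneg (by linarith : (0:ℝ) ≤ M - 1) (by linarith : 0 ≤ b - (1 - m * (1 - a)))]
end
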